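/- arXiv:math/0211333 — 6 statements merged into one kernel-verified Lean document; each statement's English description precedes it below -/
import Mathlib

section
/- Let h : ℂ → ℂ be continuous on the closed lower half-plane {τ ∈ ℂ : Im τ ≤ 0}, holomorphic on the open lower half-plane {Im τ < 0}, and satisfy |h(τ)| ≤ C(1+|τ|)^{-2} for all τ with Im τ ≤ 0 and some constant C ≥ 0. Then for every real t < 0 one has ∫_ℝ h(σ) e^{i t σ} dσ = 0. -/
open MeasureTheory

/-- If `h : ℂ → ℂ` is continuous on the closed lower half-plane,
holomorphic on the open lower half-plane, and decays like `C (1 + |τ|)⁻²` there, then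
for every `t < 0` the Fourier-type integral `∫ h(σ) e^{itσ} dσ` over the real line vanishes. -/
theorem stmt_0 (h : ℂ → ℂ) (C : ℝ) (hC : 0 ≤ C)
    (hcont : ContinuousOn h {τ : ℂ | τ.im ≤ 0})
    (hholo : DifferentiableOn ℂ h {τ : ℂ | τ.im < 0})
    (hbound : ∀ τ : ℂ, τ.im ≤ 0 → ‖h τ‖ ≤ C * (1 + ‖τ‖) ^ (-2 : ℤ)) :
    ∀ t : ℝ, t < 0 →
      (∫ σ : ℝ, h (σ : ℂ) * Complex.exp (Complex.I * (t : ℂ) * (σ : ℂ))) = 0 := by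
  intro t ht
  set G : ℂ → ℂ := fun z => h z * Complex.exp (Complex.I * (t : ℂ) * z) with hGdef
  -- the norm of the exponential factor
  have hexp_norm : ∀ z : ℂ, ‖Complex.exp (Complex.I * (t : ℂ) * z)‖ = Real.exp (-(t * z.im)) := by
    intro z
    rw [Complex.norm_exp]
    congr 1
    simp [Complex.mul_re, Complex.mul_im]
  -- basic bound on G on the closed lower half-plane
  have hGb : ∀ z : ℂ, z.im ≤ 0 →
      ‖G z‖ ≤ (C * (1 + ‖z‖) ^ (-2 : ℤ)) * Real.exp (-(t * z.im)) := by
    intro z hz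
    rw [hGdef]
    simp only [norm_mul]
    exact mul_le_mul (hbound z hz) (le_of_eq (hexp_norm z)) (norm_nonneg _)
      (by positivity)
  -- majorant integrability
  have hmaj : Integrable (fun x : ℝ => C * (1 + ‖x‖) ^ (-2 : ℤ)) := by
    have h1 : Integrable (fun x : ℝ => (1 + ‖x‖) ^ (-(2 : ℝ))) :=
      integrable_one_add_norm (by norm_num)
    have := h1.const_mul C
    refine this.congr ?_
    filter_upwards with x
    rw [← Real.rpow_intCast (1 + ‖x‖) (-2 : ℤ)]
    norm_num
  -- pointwise domination on horizontal lines
  have hnormre : ∀ (x y : ℝ), ‖x‖ ≤ ‖(x : ℂ) - (y : ℂ) * Complex.I‖ := by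
    intro x y
    have : ((x : ℂ) - (y : ℂ) * Complex.I).re = x := by simp
    calc ‖x‖ = |((x : ℂ) - (y : ℂ) * Complex.I).re| := by rw [this]; simp [Real.norm_eq_abs]
    _ ≤ ‖(x : ℂ) - (y : ℂ) * Complex.I‖ := Complex.abs_re_le_norm _
  have hfactor : ∀ (x y : ℝ),
      C * (1 + ‖(x : ℂ) - (y : ℂ) * Complex.I‖) ^ (-2 : ℤ) ≤ C * (1 + ‖x‖) ^ (-2 : ℤ) := by
    intro x y
    have h1 : (0:ℝ) < 1 + ‖x‖ := by positivity
    have h2 : (0:ℝ) < 1 + ‖(x : ℂ) - (y : ℂ) * Complex.I‖ := by positivity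
    have key : (1 + ‖(x : ℂ) - (y : ℂ) * Complex.I‖ : ℝ) ^ (-2 : ℤ) ≤ (1 + ‖x‖) ^ (-2 : ℤ) := by
      rw [zpow_neg, zpow_neg]
      apply inv_anti₀ (by positivity)
      rw [show ((2:ℤ)) = ((2:ℕ):ℤ) by norm_num, zpow_natCast, zpow_natCast]
      exact pow_le_pow_left₀ (by positivity) (by linarith [hnormre x y]) 2
    exact mul_le_mul_of_nonneg_left key hC
  have key : ∀ (y : ℝ), 0 ≤ y → ∀ x : ℝ,
      ‖G ((x : ℂ) - (y : ℂ) * Complex.I)‖ ≤ (C * (1 + ‖x‖) ^ (-2 : ℤ)) * Real.exp (t * y) := by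
    intro y hy x
    have him : ((x : ℂ) - (y : ℂ) * Complex.I).im = -y := by simp
    have h1 := hGb ((x : ℂ) - (y : ℂ) * Complex.I) (by rw [him]; linarith)
    rw [him] at h1
    have h2 : -(t * -y) = t * y := by ring
    rw [h2] at h1
    refine h1.trans ?_
    exact mul_le_mul_of_nonneg_right (hfactor x y) (Real.exp_pos _).le
  -- continuity of G on the closed half-plane
  have hGcont : ContinuousOn G {τ : ℂ | τ.im ≤ 0} :=
    hcont.mul ((Complex.continuous_exp.comp (continuous_const.mul continuous_id)).continuousOn)
  -- integrability on horizontal lines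
  have hint : ∀ y : ℝ, 0 ≤ y →
      Integrable (fun x : ℝ => G ((x : ℂ) - (y : ℂ) * Complex.I)) := by
    intro y hy
    have hc : Continuous (fun x : ℝ => G ((x : ℂ) - (y : ℂ) * Complex.I)) := by
      apply hGcont.comp_continuous
      · exact (Complex.continuous_ofReal.sub continuous_const)
      · intro x; simp only [Set.mem_setOf_eq]; simp; linarith
    refine hmaj.mono' hc.aestronglyMeasurable ?_
    filter_upwards with x
    refine (key y hy x).trans ?_
    have : Real.exp (t * y) ≤ 1 := by
      rw [Real.exp_le_one_iff]
      nlinarith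
    nlinarith [mul_nonneg hC (zpow_nonneg (by positivity : (0:ℝ) ≤ 1 + ‖x‖) (-2 : ℤ)),
      Real.exp_pos (t * y)]
  have hint0 : Integrable (fun x : ℝ => G (x : ℂ)) := by
    have := hint 0 le_rfl
    simpa using this
  -- differentiability of G on the open half-plane
  have hGholo : DifferentiableOn ℂ G {τ : ℂ | τ.im < 0} :=
    hholo.mul ((Complex.differentiable_exp.comp
      ((differentiable_const _).mul differentiable_id)).differentiableOn)
  have hopen : IsOpen {τ : ℂ | τ.im < 0} := isOpen_lt Complex.continuous_im continuous_const
  -- contour shift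
  have contour : ∀ y : ℝ, 0 < y →
      (∫ x : ℝ, G (x : ℂ)) = ∫ x : ℝ, G ((x : ℂ) - (y : ℂ) * Complex.I) := by
    intro y hy
    -- vertical integrals
    set VR : ℝ → ℂ := fun T => ∫ s : ℝ in (-y)..0, G ((T : ℂ) + (s : ℂ) * Complex.I) with hVR
    set VL : ℝ → ℂ := fun T => ∫ s : ℝ in (-y)..0, G ((-T : ℂ) + (s : ℂ) * Complex.I) with hVL
    have rect : ∀ T : ℝ,
        (∫ x : ℝ in (-T)..T, G ((x : ℂ) + ((-y : ℝ) : ℂ) * Complex.I))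
          - (∫ x : ℝ in (-T)..T, G ((x : ℂ) + ((0 : ℝ) : ℂ) * Complex.I))
          + Complex.I • VR T - Complex.I • VL T = 0 := by
      intro T
      have := Complex.integral_boundary_rect_eq_zero_of_differentiable_on_off_countable G
        ((-T : ℝ) + (-y : ℝ) * Complex.I) ((T : ℝ) + (0 : ℝ) * Complex.I) ∅ Set.countable_empty
        ?_ ?_
      · simpa using this
      · refine hGcont.mono ?_
        intro p hp
        simp only [Set.mem_setOf_eq]
        have hp2 : p.im ∈ Set.uIcc (-y : ℝ) 0 := by
          have := hp.2
          simpa using this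
        rw [Set.uIcc_of_le (by linarith : -y ≤ (0:ℝ))] at hp2
        exact hp2.2
      · intro p hp
        apply hGholo.differentiableAt (hopen.mem_nhds _)
        simp only [Set.mem_setOf_eq]
        have hp2 : p.im ∈ Set.Ioo (min (-y : ℝ) 0) (max (-y : ℝ) 0) := by
          have := hp.1.2
          simpa using this
        rw [max_eq_right (by linarith : -y ≤ (0:ℝ))] at hp2
        exact hp2.2
    -- bound on the integrand on vertical segments
    have vb : ∀ r s : ℝ, -y ≤ s → s ≤ 0 →
        ‖G ((r : ℂ) + (s : ℂ) * Complex.I)‖ ≤ C * (1 + |r|) ^ (-2 : ℤ) := by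
      intro r s h1 h2
      have him : ((r : ℂ) + (s : ℂ) * Complex.I).im = s := by simp
      have h3 := hGb ((r : ℂ) + (s : ℂ) * Complex.I) (by rw [him]; exact h2)
      rw [him] at h3
      have hexp1 : Real.exp (-(t * s)) ≤ 1 := by
        rw [Real.exp_le_one_iff]
        nlinarith
      have hre : |r| ≤ ‖(r : ℂ) + (s : ℂ) * Complex.I‖ := by
        have hr : ((r : ℂ) + (s : ℂ) * Complex.I).re = r := by simp
        calc |r| = |((r : ℂ) + (s : ℂ) * Complex.I).re| := by rw [hr]
        _ ≤ ‖(r : ℂ) + (s : ℂ) * Complex.I‖ := Complex.abs_re_le_norm _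
      have hz : C * (1 + ‖(r : ℂ) + (s : ℂ) * Complex.I‖) ^ (-2 : ℤ)
          ≤ C * (1 + |r|) ^ (-2 : ℤ) := by
        refine mul_le_mul_of_nonneg_left ?_ hC
        rw [zpow_neg, zpow_neg]
        apply inv_anti₀ (by positivity)
        rw [show ((2:ℤ)) = ((2:ℕ):ℤ) by norm_num, zpow_natCast, zpow_natCast]
        exact pow_le_pow_left₀ (by positivity) (by linarith) 2
      calc ‖G ((r : ℂ) + (s : ℂ) * Complex.I)‖
          ≤ C * (1 + ‖(r : ℂ) + (s : ℂ) * Complex.I‖) ^ (-2 : ℤ) * Real.exp (-(t * s)) := h3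
      _ ≤ C * (1 + ‖(r : ℂ) + (s : ℂ) * Complex.I‖) ^ (-2 : ℤ) * 1 := by
          refine mul_le_mul_of_nonneg_left hexp1 (by positivity)
      _ = C * (1 + ‖(r : ℂ) + (s : ℂ) * Complex.I‖) ^ (-2 : ℤ) := mul_one _
      _ ≤ C * (1 + |r|) ^ (-2 : ℤ) := hz
    -- norm bounds on vertical integrals
    have hVRb : ∀ T : ℝ, ‖VR T‖ ≤ C * (1 + |T|) ^ (-2 : ℤ) * y := by
      intro T
      have := intervalIntegral.norm_integral_le_of_norm_le_const
        (C := C * (1 + |T|) ^ (-2 : ℤ)) (a := -y) (b := (0:ℝ))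
        (f := fun s => G ((T : ℂ) + (s : ℂ) * Complex.I)) ?_
      · rw [hVR]
        refine this.trans ?_
        have : |(0:ℝ) - -y| = y := by rw [abs_of_nonneg] <;> linarith
        rw [this]
      · intro s hs
        rw [Set.uIoc_of_le (by linarith : -y ≤ (0:ℝ))] at hs
        exact vb T s hs.1.le hs.2
    have hVLb : ∀ T : ℝ, ‖VL T‖ ≤ C * (1 + |T|) ^ (-2 : ℤ) * y := by
      intro T
      have := intervalIntegral.norm_integral_le_of_norm_le_const
        (C := C * (1 + |T|) ^ (-2 : ℤ)) (a := -y) (b := (0:ℝ))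
        (f := fun s => G ((-T : ℂ) + (s : ℂ) * Complex.I)) ?_
      · rw [hVL]
        refine this.trans ?_
        have : |(0:ℝ) - -y| = y := by rw [abs_of_nonneg] <;> linarith
        rw [this]
      · intro s hs
        rw [Set.uIoc_of_le (by linarith : -y ≤ (0:ℝ))] at hs
        have := vb (-T) s hs.1.le hs.2
        rw [abs_neg] at this
        simpa using this
    -- decay of the bound
    have hdecay : Filter.Tendsto (fun T : ℝ => C * (1 + |T|) ^ (-2 : ℤ) * y)
        Filter.atTop (nhds 0) := by
      have h1 : Filter.Tendsto (fun T : ℝ => 1 + |T|) Filter.atTop Filter.atTop :=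
        Filter.tendsto_atTop_add_const_left _ 1 Filter.tendsto_abs_atTop_atTop
      have h2 : Filter.Tendsto (fun x : ℝ => x ^ (-2 : ℤ)) Filter.atTop (nhds 0) :=
        tendsto_zpow_atTop_zero (by norm_num)
      have h3 := ((h2.comp h1).const_mul C).mul_const y
      simpa using h3
    have vertR : Filter.Tendsto VR Filter.atTop (nhds 0) := by
      rw [tendsto_zero_iff_norm_tendsto_zero]
      exact tendsto_of_tendsto_of_tendsto_of_le_of_le tendsto_const_nhds hdecay
        (fun T => norm_nonneg _) hVRb
    have vertL : Filter.Tendsto VL Filter.atTop (nhds 0) := by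
      rw [tendsto_zero_iff_norm_tendsto_zero]
      exact tendsto_of_tendsto_of_tendsto_of_le_of_le tendsto_const_nhds hdecay
        (fun T => norm_nonneg _) hVLb
    -- horizontal limits
    have htop : Filter.Tendsto (fun T : ℝ => ∫ x : ℝ in (-T)..T, G (x : ℂ))
        Filter.atTop (nhds (∫ x : ℝ, G (x : ℂ))) :=
      intervalIntegral_tendsto_integral hint0 Filter.tendsto_neg_atTop_atBot Filter.tendsto_id
    have hbot : Filter.Tendsto
        (fun T : ℝ => ∫ x : ℝ in (-T)..T, G ((x : ℂ) - (y : ℂ) * Complex.I))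
        Filter.atTop (nhds (∫ x : ℝ, G ((x : ℂ) - (y : ℂ) * Complex.I))) :=
      intervalIntegral_tendsto_integral (hint y hy.le) Filter.tendsto_neg_atTop_atBot Filter.tendsto_id
    -- rewrite the rectangle identity
    have heq : ∀ T : ℝ, (∫ x : ℝ in (-T)..T, G ((x : ℂ) - (y : ℂ) * Complex.I))
        = (∫ x : ℝ in (-T)..T, G (x : ℂ)) - Complex.I • VR T + Complex.I • VL T := by
      intro T
      have h0 := rect T
      have e1 : ∀ x : ℝ, (x : ℂ) + ((-y : ℝ) : ℂ) * Complex.I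
          = (x : ℂ) - (y : ℂ) * Complex.I := by intro x; push_cast; ring
      have e2 : ∀ x : ℝ, (x : ℂ) + ((0 : ℝ) : ℂ) * Complex.I = (x : ℂ) := by
        intro x; push_cast; ring
      simp_rw [e1, e2] at h0
      simp only [smul_eq_mul] at h0 ⊢
      linear_combination h0
    have lim2 : Filter.Tendsto
        (fun T : ℝ => ∫ x : ℝ in (-T)..T, G ((x : ℂ) - (y : ℂ) * Complex.I))
        Filter.atTop (nhds (∫ x : ℝ, G (x : ℂ))) := by
      have h4 := (htop.sub (vertR.const_smul Complex.I)).add (vertL.const_smul Complex.I)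
      simp only [smul_zero, sub_zero, add_zero] at h4
      exact Filter.Tendsto.congr (fun T => (heq T).symm) h4
    exact tendsto_nhds_unique lim2 hbot
  -- bound on the shifted integral
  have hK : ∀ y : ℝ, 0 < y → ‖∫ x : ℝ, G (x : ℂ)‖
      ≤ (∫ x : ℝ, C * (1 + ‖x‖) ^ (-2 : ℤ)) * Real.exp (t * y) := by
    intro y hy
    rw [contour y hy]
    have h5 := norm_integral_le_of_norm_le
      (f := fun x : ℝ => G ((x : ℂ) - (y : ℂ) * Complex.I))
      (g := fun x : ℝ => C * (1 + ‖x‖) ^ (-2 : ℤ) * Real.exp (t * y))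
      (hmaj.mul_const _) (Filter.Eventually.of_forall (key y hy.le))
    rwa [integral_mul_const] at h5
  have hlim : Filter.Tendsto
      (fun y : ℝ => (∫ x : ℝ, C * (1 + ‖x‖) ^ (-2 : ℤ)) * Real.exp (t * y))
      Filter.atTop (nhds 0) := by
    have h6 : Filter.Tendsto (fun y : ℝ => t * y) Filter.atTop Filter.atBot :=
      (Filter.tendsto_const_mul_atBot_of_neg ht).mpr Filter.tendsto_id
    have h7 := (Real.tendsto_exp_atBot.comp h6).const_mul (∫ x : ℝ, C * (1 + ‖x‖) ^ (-2 : ℤ))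
    simpa using h7
  have hfin : ‖∫ x : ℝ, G (x : ℂ)‖ ≤ 0 := by
    refine ge_of_tendsto hlim ?_
    filter_upwards [Filter.eventually_gt_atTop 0] with y hy
    exact hK y hy
  have : (∫ x : ℝ, G (x : ℂ)) = 0 := norm_le_zero_iff.mp hfin
  exact this
end

section
/- Let R be a commutative ring in which 2 is invertible, M an R-module, Q a quadratic form on M, and let e : Cl(Q) ≃ Λ(M) denote the Chevalley linear equivalence between the Clifford algebra of Q and the exterior algebra of M (quantization map c = e^{-1}, symbol map σ = e). Then for every i-vector α ∈ Λ^i M and every j-vector β ∈ Λ^j M, the element σ(c(α)·c(β)) − α ∧ β of Λ(M) lies in the sum of the homogeneous components of exterior degree at most i + j − 2. -/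
set_option maxHeartbeats 1000000
open CliffordAlgebra

section stmt3_aux

variable {R M : Type*} [CommRing R] [AddCommGroup M] [Module R M]

lemma stmt3_mem_S {s : Set ℕ} {k : ℕ} (hk : k ∈ s) {x : ExteriorAlgebra R M}
    (hx : x ∈ ⋀[R]^k M) : x ∈ ⨆ k ∈ s, ⋀[R]^k M :=
  Submodule.mem_iSup_of_mem k (Submodule.mem_iSup_of_mem hk hx)

lemma stmt3_S_mono {s t : Set ℕ} (h : s ⊆ t) :
    (⨆ k ∈ s, ⋀[R]^k M) ≤ ⨆ k ∈ t, ⋀[R]^k M :=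
  biSup_mono h

@[elab_as_elim]
lemma stmt3_S_induction {s : Set ℕ}
    {C : (x : ExteriorAlgebra R M) → x ∈ (⨆ k ∈ s, ⋀[R]^k M) → Prop}
    (hmem : ∀ k (hk : k ∈ s), ∀ y (hy : y ∈ ⋀[R]^k M), C y (stmt3_mem_S hk hy))
    (h0 : C 0 (zero_mem _))
    (hadd : ∀ a b (ha : a ∈ _) (hb : b ∈ _), C a ha → C b hb → C (a + b) (add_mem ha hb))
    {x : ExteriorAlgebra R M}
    (hx : x ∈ ⨆ k ∈ s, ⋀[R]^k M) : C x hx := by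
  refine Exists.elim ?_ fun (hx : x ∈ ⨆ k ∈ s, ⋀[R]^k M) (hc : C x hx) => hc
  refine Submodule.iSup_induction (motive := fun x => ∃ h, C x h)
    (fun k => ⨆ _ : k ∈ s, (⋀[R]^k M)) hx (fun k y hy => ?_) ⟨zero_mem _, h0⟩
    (fun a b ⟨ha, hca⟩ ⟨hb, hcb⟩ => ⟨add_mem ha hb, hadd a b ha hb hca hcb⟩)
  by_cases hk : k ∈ s
  · rw [iSup_pos hk] at hy
    exact ⟨stmt3_mem_S hk hy, hmem k hk y hy⟩
  · rw [iSup_neg hk] at hy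
    rw [Submodule.mem_bot] at hy
    subst hy
    exact ⟨zero_mem _, h0⟩

lemma stmt3_mul_mem {s t u : Set ℕ} (h : ∀ a ∈ s, ∀ b ∈ t, a + b ∈ u)
    {x y : ExteriorAlgebra R M} (hx : x ∈ ⨆ k ∈ s, ⋀[R]^k M)
    (hy : y ∈ ⨆ k ∈ t, ⋀[R]^k M) : x * y ∈ ⨆ k ∈ u, ⋀[R]^k M := by
  induction hx using stmt3_S_induction with
  | hmem a ha x hx =>
    induction hy using stmt3_S_induction with
    | hmem b hb y hy =>
      refine stmt3_mem_S (h a ha b hb) ?_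
      have := Submodule.mul_mem_mul hx hy
      rwa [← pow_add] at this
    | h0 => rw [mul_zero]; exact zero_mem _
    | hadd y₁ y₂ hy₁ hy₂ ih₁ ih₂ => rw [mul_add]; exact add_mem ih₁ ih₂
  | h0 => rw [zero_mul]; exact zero_mem _
  | hadd x₁ x₂ hx₁ hx₂ ih₁ ih₂ => rw [add_mul]; exact add_mem ih₁ ih₂

lemma stmt3_ι_mem_one (v : M) : ExteriorAlgebra.ι R v ∈ ⋀[R]^1 M := by
  show _ ∈ _ ^ 1
  rw [pow_one]
  exact LinearMap.mem_range_self _ v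

lemma stmt3_contract_pow (d : Module.Dual R M) {k : ℕ} {x : ExteriorAlgebra R M}
    (hx : x ∈ ⋀[R]^k M) :
    contractLeft (Q := (0 : QuadraticForm R M)) d x ∈ ⨆ l ∈ {l : ℕ | l + 1 ≤ k}, ⋀[R]^l M := by
  induction hx using Submodule.pow_induction_on_left' with
  | algebraMap r => rw [contractLeft_algebraMap]; exact zero_mem _
  | add x y n hx hy ihx ihy => rw [map_add]; exact add_mem ihx ihy
  | mem_mul m hm n x hx ih =>
    obtain ⟨v, rfl⟩ := hm
    rw [contractLeft_ι_mul]
    refine sub_mem (stmt3_mem_S (show n ∈ {l : ℕ | l + 1 ≤ n + 1} from by simp)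
      (Submodule.smul_mem _ _ hx)) ?_
    refine stmt3_mul_mem (s := ({1} : Set ℕ)) ?_ (stmt3_mem_S (Set.mem_singleton 1) (stmt3_ι_mem_one v)) ih
    intro a ha b hb
    simp only [Set.mem_singleton_iff] at ha
    subst ha
    simp only [Set.mem_setOf_eq] at hb ⊢
    omega

lemma stmt3_contract_filt (d : Module.Dual R M) {n : ℕ} {x : ExteriorAlgebra R M}
    (hx : x ∈ ⨆ k ∈ {k : ℕ | k ≤ n}, ⋀[R]^k M) :
    contractLeft (Q := (0 : QuadraticForm R M)) d x ∈ ⨆ l ∈ {l : ℕ | l + 1 ≤ n}, ⋀[R]^l M := by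
  induction hx using stmt3_S_induction with
  | hmem k hk y hy =>
    refine stmt3_S_mono ?_ (stmt3_contract_pow d hy)
    intro l hl
    simp only [Set.mem_setOf_eq] at hk hl ⊢
    omega
  | h0 => rw [map_zero]; exact zero_mem _
  | hadd a b ha hb iha ihb => rw [map_add]; exact add_mem iha ihb

end stmt3_aux

section stmt3_main

variable {R M : Type*} [CommRing R] [Invertible (2 : R)] [AddCommGroup M] [Module R M]
  (Q : QuadraticForm R M)

lemma stmt3_key : ∀ (i : ℕ) (α : ExteriorAlgebra R M),
    α ∈ (⨆ k ∈ {k : ℕ | k ≤ i}, ⋀[R]^k M) → ∀ (j : ℕ) (y : CliffordAlgebra Q),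
    equivExterior Q y ∈ (⨆ k ∈ {k : ℕ | k ≤ j}, ⋀[R]^k M) →
    equivExterior Q ((equivExterior Q).symm α * y) - α * equivExterior Q y
      ∈ ⨆ k ∈ {k : ℕ | k + 2 ≤ i + j}, ⋀[R]^k M := by
  intro i
  induction i with
  | zero =>
    intro α hα
    induction hα using stmt3_S_induction with
    | hmem k hk α hα =>
      intro j y hy
      have hk0 : k = 0 := Nat.le_zero.mp hk
      subst hk0
      have hα' : α ∈ (LinearMap.range (ExteriorAlgebra.ι R (M := M))) ^ 0 := hα
      rw [pow_zero] at hα'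
      obtain ⟨r, rfl⟩ := Submodule.mem_one.mp hα'
      have hc : (equivExterior Q).symm (algebraMap R _ r) = algebraMap R _ r :=
        changeForm_algebraMap (changeForm.neg_proof changeForm.associated_neg_proof) r
      rw [hc, ← Algebra.smul_def, map_smul, ← Algebra.smul_def, sub_self]
      exact zero_mem _
    | h0 =>
      intro j y hy
      simp only [map_zero, zero_mul, sub_zero, map_zero]
      exact zero_mem _
    | hadd a b ha hb iha ihb =>
      intro j y hy
      have hsplit : equivExterior Q ((equivExterior Q).symm (a + b) * y)
          - (a + b) * equivExterior Q y
          = (equivExterior Q ((equivExterior Q).symm a * y) - a * equivExterior Q y)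
          + (equivExterior Q ((equivExterior Q).symm b * y) - b * equivExterior Q y) := by
        rw [map_add, add_mul, map_add, add_mul]; abel
      rw [hsplit]
      exact add_mem (iha j y hy) (ihb j y hy)
  | succ i IH =>
    intro α hα
    induction hα using stmt3_S_induction with
    | hmem k hk α hα =>
      intro j y hy
      rcases Nat.lt_or_ge k (i + 1) with hki | hki
      · refine stmt3_S_mono ?_ (IH α (stmt3_mem_S (s := {k : ℕ | k ≤ i}) (Set.mem_ofPred.mpr (Nat.lt_succ_iff.mp hki)) hα) j y hy)
        intro l hl
        simp only [Set.mem_setOf_eq] at hl ⊢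
        omega
      · have hk' : k = i + 1 := le_antisymm hk hki
        subst hk'
        clear hk hki
        have hα' : α ∈ LinearMap.range (ExteriorAlgebra.ι R (M := M)) * ⋀[R]^i M := by
          have h2 : α ∈ (LinearMap.range (ExteriorAlgebra.ι R (M := M))) ^ (i + 1) := hα
          rwa [pow_succ'] at h2
        clear hα
        induction hα' using Submodule.mul_induction_on' with
        | mem_mul_mem m hm α' hα' =>
          obtain ⟨v, rfl⟩ := hm
          set e := equivExterior Q with he
          set c := (equivExterior Q).symm with hcdef
          set B := QuadraticMap.associated (R := R) (-Q) with hB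
          have hc_ι : c (ExteriorAlgebra.ι R v * α') = ι Q v * c α'
              - contractLeft ((-B) v) (c α') :=
            changeForm_ι_mul (changeForm.neg_proof changeForm.associated_neg_proof) v α'
          have he_ι : ∀ z : CliffordAlgebra Q, e (ι Q v * z)
              = ExteriorAlgebra.ι R v * e z - contractLeft (B v) (e z) :=
            fun z => changeForm_ι_mul changeForm.associated_neg_proof v z
          have he_contract : ∀ (d : Module.Dual R M) (z : CliffordAlgebra Q),
              e (contractLeft d z) = contractLeft d (e z) :=
            fun d z => changeForm_contractLeft changeForm.associated_neg_proof d z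
          have hd : e (c α' * y) - α' * e y ∈ ⨆ k ∈ {k : ℕ | k + 2 ≤ i + j}, ⋀[R]^k M :=
            IH α' (stmt3_mem_S (s := {k : ℕ | k ≤ i}) (Set.mem_ofPred.mpr (le_refl i)) hα') j y hy
          have hez_filt : e (c α' * y) ∈ ⨆ k ∈ {k : ℕ | k ≤ i + j}, ⋀[R]^k M := by
            have h1 : α' * e y ∈ ⨆ k ∈ {k : ℕ | k ≤ i + j}, ⋀[R]^k M := by
              refine stmt3_mul_mem ?_ (stmt3_mem_S (s := {k : ℕ | k ≤ i}) (Set.mem_ofPred.mpr (le_refl i)) hα') hy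
              intro a ha b hb
              exact Nat.add_le_add ha hb
            have h2 : e (c α' * y) - α' * e y ∈ ⨆ k ∈ {k : ℕ | k ≤ i + j}, ⋀[R]^k M := by
              refine stmt3_S_mono ?_ hd
              intro l hl
              simp only [Set.mem_setOf_eq] at hl ⊢
              omega
            have h3 := add_mem h2 h1
            rwa [sub_add_cancel] at h3
          set w := contractLeft (Q := Q) ((-B) v) (c α') with hw
          have hew : e w ∈ ⨆ l ∈ {l : ℕ | l + 1 ≤ i}, ⋀[R]^l M := by
            rw [hw, he_contract, he, hcdef, LinearEquiv.apply_symm_apply]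
            exact stmt3_contract_pow _ hα'
          have hwy : e (w * y) ∈ ⨆ k ∈ {k : ℕ | k + 2 ≤ (i + 1) + j}, ⋀[R]^k M := by
            have hwc : w = c (e w) := (LinearEquiv.symm_apply_apply _ _).symm
            rw [hwc]
            generalize e w = γ at hew
            clear hwc hw
            induction hew using stmt3_S_induction with
            | hmem l hl γ hγ =>
              simp only [Set.mem_setOf_eq] at hl
              have hdiff := IH γ (stmt3_mem_S (show l ∈ {k : ℕ | k ≤ i} from by
                simp only [Set.mem_setOf_eq]; omega) hγ) j y hy
              have hprod : γ * e y ∈ ⨆ k ∈ {k : ℕ | k + 2 ≤ (i + 1) + j}, ⋀[R]^k M := by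
                refine stmt3_mul_mem ?_ (stmt3_mem_S (s := ({l} : Set ℕ)) (Set.mem_singleton l) hγ) hy
                intro a ha b hb
                simp only [Set.mem_singleton_iff] at ha
                subst ha
                simp only [Set.mem_setOf_eq] at hb ⊢
                omega
              have hdiff' : e (c γ * y) - γ * e y
                  ∈ ⨆ k ∈ {k : ℕ | k + 2 ≤ (i + 1) + j}, ⋀[R]^k M := by
                refine stmt3_S_mono ?_ hdiff
                intro l' hl'
                simp only [Set.mem_setOf_eq] at hl' ⊢
                omega
              have h3 := add_mem hdiff' hprod
              rwa [sub_add_cancel] at h3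
            | h0 => simp only [map_zero, zero_mul]; exact zero_mem _
            | hadd a b ha hb iha ihb =>
              rw [map_add, add_mul, map_add]; exact add_mem iha ihb
          have hkey : e (c (ExteriorAlgebra.ι R v * α') * y)
              - (ExteriorAlgebra.ι R v * α') * e y
              = ExteriorAlgebra.ι R v * (e (c α' * y) - α' * e y)
                - contractLeft (B v) (e (c α' * y)) - e (w * y) := by
            rw [hc_ι, sub_mul, mul_assoc, map_sub, he_ι, mul_sub, mul_assoc]
            abel
          rw [hkey]
          refine sub_mem (sub_mem ?_ ?_) hwy
          · refine stmt3_mul_mem ?_ (stmt3_mem_S (s := ({1} : Set ℕ)) (Set.mem_singleton 1)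
              (stmt3_ι_mem_one v)) hd
            intro a ha b hb
            simp only [Set.mem_singleton_iff] at ha
            subst ha
            simp only [Set.mem_setOf_eq] at hb ⊢
            omega
          · refine stmt3_S_mono ?_ (stmt3_contract_filt _ hez_filt)
            intro l hl
            simp only [Set.mem_setOf_eq] at hl ⊢
            omega
        | add a ha b hb iha ihb =>
          have habs : equivExterior Q ((equivExterior Q).symm (a + b) * y)
              - (a + b) * equivExterior Q y
              = (equivExterior Q ((equivExterior Q).symm a * y) - a * equivExterior Q y)
              + (equivExterior Q ((equivExterior Q).symm b * y) - b * equivExterior Q y) := by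
            rw [map_add, add_mul, map_add, add_mul]; abel
          rw [habs]
          exact add_mem iha ihb
    | h0 =>
      intro j y hy
      simp only [map_zero, zero_mul, sub_zero, map_zero]
      exact zero_mem _
    | hadd a b ha hb iha ihb =>
      intro j y hy
      have hsplit : equivExterior Q ((equivExterior Q).symm (a + b) * y)
          - (a + b) * equivExterior Q y
          = (equivExterior Q ((equivExterior Q).symm a * y) - a * equivExterior Q y)
          + (equivExterior Q ((equivExterior Q).symm b * y) - b * equivExterior Q y) := by
        rw [map_add, add_mul, map_add, add_mul]; abel
      rw [hsplit]
      exact add_mem (iha j y hy) (ihb j y hy)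

end stmt3_main

/-- Let `e = CliffordAlgebra.equivExterior Q` be the Chevalley linear
equivalence between the Clifford algebra of a quadratic form `Q` (over a ring in which `2` is
invertible) and the exterior algebra, with quantization map `c = e.symm` and symbol map
`σ = e`. Then for `α ∈ Λ^i M` and `β ∈ Λ^j M`, the element `σ(c(α)·c(β)) − α ∧ β` lies in the
sum of the exterior-degree components of degree at most `i + j − 2`. -/
theorem stmt_3 {R M : Type*} [CommRing R] [Invertible (2 : R)] [AddCommGroup M] [Module R M]
    (Q : QuadraticForm R M) (i j : ℕ)
    (α β : ExteriorAlgebra R M) (hα : α ∈ ⋀[R]^i M) (hβ : β ∈ ⋀[R]^j M) :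
    (CliffordAlgebra.equivExterior Q)
        ((CliffordAlgebra.equivExterior Q).symm α * (CliffordAlgebra.equivExterior Q).symm β)
      - α * β ∈ ⨆ k ∈ {k : ℕ | k + 2 ≤ i + j}, ⋀[R]^k M := by
  have h := stmt3_key Q i α (stmt3_mem_S (s := {k : ℕ | k ≤ i}) (Set.mem_ofPred.mpr (le_refl i)) hα) j ((CliffordAlgebra.equivExterior Q).symm β)
    (by rw [LinearEquiv.apply_symm_apply]; exact stmt3_mem_S (s := {k : ℕ | k ≤ j}) (Set.mem_ofPred.mpr (le_refl j)) hβ)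
  rwa [LinearEquiv.apply_symm_apply] at h
end

section
/- For every a ∈ ℝ, the Mehler kernel S_a satisfies the harmonic-oscillator heat equation on ℝ × (0,∞): ∂_t S_a(x,t) = ∂²_x S_a(x,t) − (a²x²/4) S_a(x,t) for all x ∈ ℝ and t > 0. -/
open Real

/-- The Mehler kernel `S_a(x,t) = (4πt)^{−1/2} (at/sinh(at))^{1/2} exp(−(x²/(4t))·(at/tanh(at)))`,
with the conventions `at/sinh(at) = at/tanh(at) = 1` when `a = 0`. -/
noncomputable def mehlerS (a x t : ℝ) : ℝ :=
  (4 * Real.pi * t) ^ (-(1 : ℝ) / 2) *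
    Real.sqrt (if a = 0 then 1 else (a * t) / Real.sinh (a * t)) *
    Real.exp (-(x ^ 2 / (4 * t)) * (if a = 0 then 1 else (a * t) / Real.tanh (a * t)))

/- ### Auxiliary lemmas -/

lemma mehler_gauss_hasDerivAt (K c t y : ℝ) :
    HasDerivAt (fun z => K * Real.exp (-(z ^ 2 / (4 * t)) * c))
      (-(y * c) / (2 * t) * (K * Real.exp (-(y ^ 2 / (4 * t)) * c))) y := by
  have h1 : HasDerivAt (fun z : ℝ => -(z ^ 2 / (4 * t)) * c) (-(y * c) / (2 * t)) y := by
    have h0 : HasDerivAt (fun z : ℝ => z ^ 2) (2 * y) y := by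
      simpa using hasDerivAt_pow 2 y
    have := ((h0.div_const (4 * t)).neg).mul_const c
    refine this.congr_deriv (Eq.symm ?_)
    ring
  have := h1.exp.const_mul K
  refine this.congr_deriv (Eq.symm ?_)
  ring

lemma mehler_gauss_deriv2 (K c t x : ℝ) :
    deriv (deriv (fun z => K * Real.exp (-(z ^ 2 / (4 * t)) * c))) x
      = (x ^ 2 * c ^ 2 / (4 * t ^ 2) - c / (2 * t)) *
        (K * Real.exp (-(x ^ 2 / (4 * t)) * c)) := by
  have hd : deriv (fun z => K * Real.exp (-(z ^ 2 / (4 * t)) * c))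
      = fun y => -(y * c) / (2 * t) * (K * Real.exp (-(y ^ 2 / (4 * t)) * c)) :=
    funext fun y => (mehler_gauss_hasDerivAt K c t y).deriv
  rw [hd]
  have h1 : HasDerivAt (fun y : ℝ => -(y * c) / (2 * t)) (-(1 * c) / (2 * t)) x :=
    ((hasDerivAt_id x).mul_const c).neg.div_const (2 * t)
  have h2 := h1.fun_mul (mehler_gauss_hasDerivAt K c t x)
  rw [h2.deriv]
  ring

lemma mehler_F1_hasDerivAt (t : ℝ) (ht : 0 < t) :
    HasDerivAt (fun s : ℝ => (4 * π * s) ^ (-(1:ℝ) / 2))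
      (-(1 / (2 * t)) * (4 * π * t) ^ (-(1:ℝ) / 2)) t := by
  have hπ := Real.pi_pos
  have hpos : (0:ℝ) < 4 * π * t := by positivity
  have hlin : HasDerivAt (fun s : ℝ => 4 * π * s) (4 * π) t := by
    simpa using (hasDerivAt_id t).const_mul (4 * π)
  have h := (Real.hasDerivAt_rpow_const (x := 4 * π * t) (p := -(1:ℝ)/2)
      (Or.inl hpos.ne')).comp t hlin
  refine h.congr_deriv (Eq.symm ?_)
  rw [show (4 * π * t) ^ (-(1:ℝ)/2 - 1) = (4 * π * t) ^ (-(1:ℝ)/2) / (4 * π * t) by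
    rw [Real.rpow_sub hpos, Real.rpow_one]]
  field_simp

lemma mehler_sigma_pos {u : ℝ} (hu : u ≠ 0) : 0 < u / Real.sinh u := by
  rcases hu.lt_or_gt with h | h
  · exact div_pos_of_neg_of_neg h (Real.sinh_neg_iff.mpr h)
  · exact div_pos h (Real.sinh_pos_iff.mpr h)

lemma mehler_F2_hasDerivAt (a t : ℝ) (ha : a ≠ 0) (ht : 0 < t) :
    HasDerivAt (fun s : ℝ => Real.sqrt (a * s / Real.sinh (a * s)))
      ((1 / (2 * t) - a * Real.cosh (a * t) / (2 * Real.sinh (a * t))) *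
        Real.sqrt (a * t / Real.sinh (a * t))) t := by
  have hat : a * t ≠ 0 := mul_ne_zero ha ht.ne'
  have hsh : Real.sinh (a * t) ≠ 0 := fun h => hat (Real.sinh_eq_zero.mp h)
  have hσ : 0 < a * t / Real.sinh (a * t) := mehler_sigma_pos hat
  have hlin : HasDerivAt (fun s : ℝ => a * s) a t := by
    simpa using (hasDerivAt_id t).const_mul a
  have hsinh : HasDerivAt (fun s : ℝ => Real.sinh (a * s)) (Real.cosh (a * t) * a) t :=
    (Real.hasDerivAt_sinh (a * t)).comp t hlin
  have hg : HasDerivAt (fun s : ℝ => a * s / Real.sinh (a * s))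
      ((a * Real.sinh (a * t) - a * t * (Real.cosh (a * t) * a)) / Real.sinh (a * t) ^ 2) t :=
    hlin.div hsinh hsh
  have h := hg.sqrt hσ.ne'
  convert h using 1
  set r := Real.sqrt (a * t / Real.sinh (a * t)) with hrdef
  have hr : r ^ 2 = a * t / Real.sinh (a * t) := Real.sq_sqrt hσ.le
  have hrne : r ≠ 0 := (Real.sqrt_pos.mpr hσ).ne'
  rw [eq_div_iff (by positivity : 2 * r ≠ 0)]
  rw [show (1 / (2 * t) - a * Real.cosh (a * t) / (2 * Real.sinh (a * t))) * r * (2 * r)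
      = (1 / (2 * t) - a * Real.cosh (a * t) / (2 * Real.sinh (a * t))) * 2 * r ^ 2 by ring, hr]
  field_simp

lemma mehler_F3_hasDerivAt (a x t : ℝ) (ha : a ≠ 0) (ht : 0 < t) :
    HasDerivAt (fun s : ℝ => Real.exp (-(x ^ 2 / (4 * s)) * (a * s / Real.tanh (a * s))))
      (x ^ 2 * a ^ 2 / (4 * Real.sinh (a * t) ^ 2) *
        Real.exp (-(x ^ 2 / (4 * t)) * (a * t / Real.tanh (a * t)))) t := by
  have key : ∀ s : ℝ, s ≠ 0 →
      -(x ^ 2 / (4 * s)) * (a * s / Real.tanh (a * s))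
        = -(x ^ 2 * a / 4) * (Real.cosh (a * s) / Real.sinh (a * s)) := by
    intro s hs
    have hsh : Real.sinh (a * s) ≠ 0 := fun h => (mul_ne_zero ha hs) (Real.sinh_eq_zero.mp h)
    have hch : Real.cosh (a * s) ≠ 0 := (Real.cosh_pos _).ne'
    rw [Real.tanh_eq_sinh_div_cosh]
    field_simp
  have hsh : Real.sinh (a * t) ≠ 0 :=
    fun h => (mul_ne_zero ha ht.ne') (Real.sinh_eq_zero.mp h)
  have hlin : HasDerivAt (fun s : ℝ => a * s) a t := by
    simpa using (hasDerivAt_id t).const_mul a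
  have hcosh : HasDerivAt (fun s : ℝ => Real.cosh (a * s)) (Real.sinh (a * t) * a) t :=
    (Real.hasDerivAt_cosh (a * t)).comp t hlin
  have hsinh : HasDerivAt (fun s : ℝ => Real.sinh (a * s)) (Real.cosh (a * t) * a) t :=
    (Real.hasDerivAt_sinh (a * t)).comp t hlin
  have hq : HasDerivAt (fun s : ℝ => Real.cosh (a * s) / Real.sinh (a * s))
      ((Real.sinh (a * t) * a * Real.sinh (a * t) -
        Real.cosh (a * t) * (Real.cosh (a * t) * a)) / Real.sinh (a * t) ^ 2) t :=
    hcosh.div hsinh hsh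
  have hh := (hq.const_mul (-(x ^ 2 * a / 4))).exp
  have heq : (fun s : ℝ => Real.exp (-(x ^ 2 / (4 * s)) * (a * s / Real.tanh (a * s))))
      =ᶠ[nhds t] fun s : ℝ =>
        Real.exp (-(x ^ 2 * a / 4) * (Real.cosh (a * s) / Real.sinh (a * s))) := by
    filter_upwards [eventually_ne_nhds ht.ne'] with s hs
    rw [key s hs]
  have h := hh.congr_of_eventuallyEq heq
  refine h.congr_deriv (Eq.symm ?_)
  rw [key t ht.ne']
  have hid := Real.cosh_sq (a * t)
  set E := Real.exp (-(x ^ 2 * a / 4) * (Real.cosh (a * t) / Real.sinh (a * t))) with hE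
  field_simp
  linear_combination (-(x ^ 2) * E) * hid

lemma mehler_time_deriv_zero (x t : ℝ) (ht : 0 < t) :
    HasDerivAt (fun s => mehlerS 0 x s)
      ((-(1 / (2 * t)) + x ^ 2 / (4 * t ^ 2)) * mehlerS 0 x t) t := by
  have hfun : (fun s => mehlerS 0 x s)
      = fun s => (4 * π * s) ^ (-(1:ℝ)/2) * Real.exp (-(x ^ 2 / (4 * s))) := by
    funext s
    simp [mehlerS]
  rw [hfun]
  have hF1 := mehler_F1_hasDerivAt t ht
  have hh : HasDerivAt (fun s : ℝ => -(x ^ 2 / (4 * s))) (x ^ 2 / (4 * t ^ 2)) t := by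
    have hfun2 : (fun s : ℝ => -(x ^ 2 / (4 * s))) = fun s : ℝ => -(x ^ 2 / 4 * s⁻¹) := by
      funext s; ring
    rw [hfun2]
    have := ((hasDerivAt_inv ht.ne').const_mul (x ^ 2 / 4)).neg
    refine this.congr_deriv (Eq.symm ?_)
    field_simp
  have := hF1.fun_mul hh.exp
  refine this.congr_deriv (Eq.symm ?_)
  simp [mehlerS]
  ring

/-- The Mehler kernel solves the harmonic-oscillator heat equation on
`ℝ × (0,∞)`: `∂_t S_a = ∂²_x S_a − (a²x²/4) S_a`. -/
theorem stmt_4 (a : ℝ) : ∀ (x t : ℝ), 0 < t →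
    deriv (fun s => mehlerS a x s) t =
      deriv (deriv (fun y => mehlerS a y t)) x - (a ^ 2 * x ^ 2 / 4) * mehlerS a x t := by
  intro x t ht
  -- the second space derivative
  have hxx : deriv (deriv (fun y => mehlerS a y t)) x
      = (x ^ 2 * (if a = 0 then 1 else a * t / Real.tanh (a * t)) ^ 2 / (4 * t ^ 2)
          - (if a = 0 then 1 else a * t / Real.tanh (a * t)) / (2 * t)) * mehlerS a x t := by
    have : (fun y => mehlerS a y t)
        = fun y => ((4 * Real.pi * t) ^ (-(1:ℝ)/2) *
            Real.sqrt (if a = 0 then 1 else a * t / Real.sinh (a * t))) *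
          Real.exp (-(y ^ 2 / (4 * t)) * (if a = 0 then 1 else a * t / Real.tanh (a * t))) :=
      rfl
    rw [this, mehler_gauss_deriv2]
    rfl
  rw [hxx]
  by_cases ha : a = 0
  · subst ha
    rw [(mehler_time_deriv_zero x t ht).deriv]
    have h1 : (if (0:ℝ) = 0 then (1:ℝ) else 0 * t / Real.tanh (0 * t)) = 1 := if_pos rfl
    rw [h1]
    ring
  · -- the time derivative for a ≠ 0
    have hfun : (fun s => mehlerS a x s)
        = fun s => (4 * π * s) ^ (-(1:ℝ)/2) * Real.sqrt (a * s / Real.sinh (a * s)) *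
            Real.exp (-(x ^ 2 / (4 * s)) * (a * s / Real.tanh (a * s))) := by
      funext s
      simp [mehlerS, ha]
    have hT := ((mehler_F1_hasDerivAt t ht).fun_mul (mehler_F2_hasDerivAt a t ha ht)).fun_mul
      (mehler_F3_hasDerivAt a x t ha ht)
    rw [hfun, hT.deriv]
    simp only [if_neg ha, mehlerS]
    have hat : a * t ≠ 0 := mul_ne_zero ha ht.ne'
    have hsh : Real.sinh (a * t) ≠ 0 := fun h => hat (Real.sinh_eq_zero.mp h)
    have hch : Real.cosh (a * t) ≠ 0 := (Real.cosh_pos _).ne'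
    have hid := Real.cosh_sq (a * t)
    simp only [Real.tanh_eq_sinh_div_cosh]
    set P := (4 * π * t) ^ (-(1:ℝ)/2)
    set R := Real.sqrt (a * t / Real.sinh (a * t))
    set E := Real.exp (-(x ^ 2 / (4 * t)) *
      (a * t / (Real.sinh (a * t) / Real.cosh (a * t)))) with hE
    set S1 := Real.sinh (a * t)
    set C1 := Real.cosh (a * t)
    have hscal : -(1 / (2 * t)) + (1 / (2 * t) - a * C1 / (2 * S1)) + x ^ 2 * a ^ 2 / (4 * S1 ^ 2)
        = x ^ 2 * (a * t / (S1 / C1)) ^ 2 / (4 * t ^ 2) - (a * t / (S1 / C1)) / (2 * t)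
          - a ^ 2 * x ^ 2 / 4 := by
      field_simp
      linear_combination (-2 * t * a ^ 2 * x ^ 2) * hid
    linear_combination (P * R * E) * hscal
end

section
/- For every a ∈ ℝ, t > 0 and ξ ∈ ℝ, the Fourier transform of the Mehler kernel in the space variable is given by ∫_ℝ S_a(x,t) e^{−i x ξ} dx = cosh(at)^{−1/2} exp(−ξ² · tanh(at)/a), where tanh(at)/a is interpreted as t when a = 0. -/
open MeasureTheory

lemma aux_tanh_pos (u : ℝ) (hu : u ≠ 0) : 0 < u / Real.tanh u := by
  rcases lt_or_gt_of_ne hu with h | h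
  · have h2 : Real.tanh u < 0 := by
      rw [Real.tanh_eq_sinh_div_cosh]
      exact div_neg_of_neg_of_pos (Real.sinh_neg_iff.2 h) (Real.cosh_pos u)
    exact div_pos_of_neg_of_neg h h2
  · have h2 : 0 < Real.tanh u := by
      rw [Real.tanh_eq_sinh_div_cosh]
      exact div_pos (Real.sinh_pos_iff.2 h) (Real.cosh_pos u)
    exact div_pos h h2

lemma aux_sinh_pos (u : ℝ) (hu : u ≠ 0) : 0 < u / Real.sinh u := by
  rcases lt_or_gt_of_ne hu with h | h
  · exact div_pos_of_neg_of_neg h (Real.sinh_neg_iff.2 h)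
  · exact div_pos h (Real.sinh_pos_iff.2 h)

/-- The spatial Fourier transform of the Mehler kernel:
`∫ S_a(x,t) e^{−ixξ} dx = cosh(at)^{−1/2} exp(−ξ² tanh(at)/a)`, where `tanh(at)/a` is
interpreted as `t` when `a = 0`. -/
theorem stmt_5 (a t : ℝ) (ht : 0 < t) (ξ : ℝ) :
    (∫ x : ℝ, (mehlerS a x t : ℂ) * Complex.exp (-Complex.I * (x : ℂ) * (ξ : ℂ)))
      = (((Real.cosh (a * t)) ^ (-(1 : ℝ) / 2) *
          Real.exp (-(ξ ^ 2) * (if a = 0 then t else Real.tanh (a * t) / a)) : ℝ) : ℂ) := by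
  set r : ℝ := if a = 0 then 1 else (a * t) / Real.tanh (a * t) with hrdef
  set s : ℝ := if a = 0 then 1 else (a * t) / Real.sinh (a * t) with hsdef
  have hr : 0 < r := by
    by_cases ha : a = 0
    · simp [hrdef, ha]
    · simpa [hrdef, ha] using aux_tanh_pos (a * t) (mul_ne_zero ha ht.ne')
  have hs : 0 < s := by
    by_cases ha : a = 0
    · simp [hsdef, ha]
    · simpa [hsdef, ha] using aux_sinh_pos (a * t) (mul_ne_zero ha ht.ne')
  set c : ℝ := r / (4 * t) with hcdef
  have hc : 0 < c := div_pos hr (by linarith)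
  set A : ℝ := (4 * Real.pi * t) ^ (-(1 : ℝ) / 2) * Real.sqrt s with hAdef
  have ht' : (t : ℂ) ≠ 0 := by exact_mod_cast ht.ne'
  -- rewrite the integrand
  have key : (∫ x : ℝ, (mehlerS a x t : ℂ) * Complex.exp (-Complex.I * (x : ℂ) * (ξ : ℂ)))
      = (A : ℂ) * ∫ x : ℝ, Complex.exp (Complex.I * (-ξ : ℂ) * x) *
          Complex.exp (-(c : ℂ) * x ^ 2) := by
    rw [← integral_const_mul]
    congr 1 with x
    have hm : mehlerS a x t = A * Real.exp (-(x ^ 2 / (4 * t)) * r) := by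
      rw [mehlerS, ← hrdef, ← hsdef, hAdef]
    rw [hm]
    push_cast
    rw [mul_assoc, mul_assoc, ← Complex.exp_add, ← Complex.exp_add]
    congr 1
    have hcc : (c : ℂ) = (r : ℂ) / (4 * (t : ℂ)) := by rw [hcdef]; push_cast; ring
    rw [hcc]
    field_simp
    ring_nf
  rw [key, fourierIntegral_gaussian (by simpa using hc) (-ξ : ℂ)]
  have hπc : ((Real.pi : ℂ) / (c : ℂ)) ^ (1 / 2 : ℂ) = (((Real.pi / c) ^ (1 / 2 : ℝ) : ℝ) : ℂ) := by
    rw [Complex.ofReal_cpow (le_of_lt (div_pos Real.pi_pos hc))]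
    push_cast
    norm_num
  have hexp : (-(-ξ : ℂ) ^ 2 / (4 * (c : ℂ))) =
      ((-(ξ ^ 2) * (if a = 0 then t else Real.tanh (a * t) / a) : ℝ) : ℂ) := by
    have hinv : (1 : ℝ) / (4 * c) = (if a = 0 then t else Real.tanh (a * t) / a) := by
      rw [hcdef]
      by_cases ha : a = 0
      · rw [hrdef]; simp only [ha, if_true, if_pos]; field_simp
      · have hne : Real.tanh (a * t) ≠ 0 := by
          intro h; rw [hrdef] at hr; simp only [ha, if_false, h, div_zero] at hr; exact lt_irrefl 0 hr
        rw [hrdef]; simp only [ha, if_false]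
        field_simp
    rw [← hinv]
    push_cast
    have hc' : (c : ℂ) ≠ 0 := by exact_mod_cast hc.ne'
    field_simp
  have hamp : A * (Real.pi / c) ^ (1 / 2 : ℝ) = (Real.cosh (a * t)) ^ (-(1 : ℝ) / 2) := by
    have h4πt : (0 : ℝ) < 4 * Real.pi * t := by positivity
    have hsr : s / r = 1 / Real.cosh (a * t) := by
      by_cases ha : a = 0
      · simp [hrdef, hsdef, ha]
      · have hat : a * t ≠ 0 := mul_ne_zero ha ht.ne'
        have hsinh : Real.sinh (a * t) ≠ 0 := Real.sinh_ne_zero.2 hat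
        have hcosh : Real.cosh (a * t) ≠ 0 := (Real.cosh_pos (a * t)).ne'
        rw [hrdef, hsdef]; simp only [ha, if_false]
        rw [Real.tanh_eq_sinh_div_cosh]
        field_simp
    have hπcval : Real.pi / c = (4 * Real.pi * t) * (1 / r) := by
      rw [hcdef]; field_simp
    rw [hAdef, hπcval, Real.mul_rpow h4πt.le (by positivity),
      Real.sqrt_eq_rpow]
    have h1 : (4 * Real.pi * t) ^ (-(1:ℝ) / 2) * (4 * Real.pi * t) ^ (1 / 2 : ℝ) = 1 := by
      rw [← Real.rpow_add h4πt]; norm_num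
    have h2 : s ^ (1/2 : ℝ) * (1 / r) ^ (1/2 : ℝ) = (s / r) ^ (1/2 : ℝ) := by
      rw [← Real.mul_rpow hs.le (by positivity)]
      congr 1; field_simp
    calc (4 * Real.pi * t) ^ (-(1:ℝ) / 2) * s ^ (1/2:ℝ) *
          ((4 * Real.pi * t) ^ (1/2:ℝ) * (1 / r) ^ (1/2:ℝ))
        = ((4 * Real.pi * t) ^ (-(1:ℝ) / 2) * (4 * Real.pi * t) ^ (1/2:ℝ)) *
          (s ^ (1/2:ℝ) * (1 / r) ^ (1/2:ℝ)) := by ring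
      _ = (s / r) ^ (1/2 : ℝ) := by rw [h1, h2, one_mul]
      _ = (1 / Real.cosh (a * t)) ^ (1/2 : ℝ) := by rw [hsr]
      _ = (Real.cosh (a * t)) ^ (-(1:ℝ) / 2) := by
          rw [one_div, ← Real.rpow_neg_one, ← Real.rpow_mul (Real.cosh_pos _).le]
          norm_num
  rw [hπc, hexp, ← Complex.ofReal_exp, ← Complex.ofReal_mul, ← Complex.ofReal_mul]
  congr 1
  rw [← mul_assoc, hamp]
end

section
/- For every a ∈ ℝ, the Mehler kernel converges to the Dirac mass at 0 as t → 0⁺: for every Schwartz function φ on ℝ, lim_{t→0⁺} ∫_ℝ S_a(x,t) φ(x) dx = φ(0). -/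
open MeasureTheory Topology Filter

noncomputable def Kf (a t : ℝ) : ℝ := if a = 0 then 1 else a * t / Real.tanh (a * t)

lemma tanh_pos' {x : ℝ} (hx : 0 < x) : 0 < Real.tanh x := by
  rw [Real.tanh_eq_sinh_div_cosh]
  exact div_pos (Real.sinh_pos_iff.mpr hx) (Real.cosh_pos _)

lemma Kf_pos (a : ℝ) {t : ℝ} (ht : 0 < t) : 0 < Kf a t := by
  unfold Kf; split_ifs with h
  · norm_num
  · rcases lt_or_gt_of_ne h with ha | ha
    · have h1 : a * t < 0 := mul_neg_of_neg_of_pos ha ht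
      have h2 : Real.tanh (a * t) < 0 := by
        have := tanh_pos' (x := -(a * t)) (by linarith)
        rw [Real.tanh_neg] at this; linarith
      exact div_pos_of_neg_of_neg h1 h2
    · exact div_pos (mul_pos ha ht) (tanh_pos' (mul_pos ha ht))

lemma mehler_eq (a x : ℝ) {t : ℝ} (ht : 0 < t) :
    mehlerS a x t = (4 * Real.pi * t) ^ (-(1 : ℝ) / 2) *
      (Real.sqrt (Kf a t) / Real.sqrt (Real.cosh (a * t))) *
      Real.exp (-(x ^ 2 / (4 * t)) * Kf a t) := by
  unfold mehlerS Kf; split_ifs with h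
  · simp [h]
  · have hat : a * t ≠ 0 := mul_ne_zero h ht.ne'
    have hs : Real.sinh (a * t) ≠ 0 := Real.sinh_ne_zero.mpr hat
    have hc : Real.cosh (a * t) ≠ 0 := (Real.cosh_pos _).ne'
    congr 2
    rw [← Real.sqrt_div' _ (Real.cosh_pos (a * t)).le]
    congr 1
    rw [Real.tanh_eq_sinh_div_cosh]
    field_simp

lemma rpow_neg_half (z : ℝ) (hz : 0 < z) : z ^ (-(1 : ℝ) / 2) = (Real.sqrt z)⁻¹ := by
  rw [Real.sqrt_eq_rpow, ← Real.rpow_neg hz.le]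
  norm_num

lemma integral_eq (a : ℝ) (φ : SchwartzMap ℝ ℝ) {t : ℝ} (ht : 0 < t) :
    ∫ x : ℝ, mehlerS a x t * φ x =
      (Real.sqrt (Real.cosh (a * t)))⁻¹ *
        ((Real.sqrt Real.pi)⁻¹ *
          ∫ y : ℝ, Real.exp (-y ^ 2) * φ (Real.sqrt (4 * t / Kf a t) * y)) := by
  have hk := Kf_pos a ht
  set ε := Real.sqrt (4 * t / Kf a t) with hεdef
  have h4t : (0:ℝ) < 4 * t := by linarith
  have hε0 : 0 < ε := Real.sqrt_pos.mpr (div_pos h4t hk)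
  have key := MeasureTheory.Measure.integral_comp_mul_left
    (fun x => mehlerS a x t * φ x) ε
  rw [abs_of_pos (inv_pos.mpr hε0), smul_eq_mul] at key
  have h1 : ∫ x : ℝ, mehlerS a x t * φ x
      = ε * ∫ x : ℝ, mehlerS a (ε * x) t * φ (ε * x) := by
    rw [key]; field_simp
  have hsq : Real.sqrt (4 * t) ≠ 0 := (Real.sqrt_pos.mpr h4t).ne'
  have hsk : Real.sqrt (Kf a t) ≠ 0 := (Real.sqrt_pos.mpr hk).ne'
  have hsp : Real.sqrt Real.pi ≠ 0 := (Real.sqrt_pos.mpr Real.pi_pos).ne'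
  have hsc : Real.sqrt (Real.cosh (a * t)) ≠ 0 :=
    (Real.sqrt_pos.mpr (Real.cosh_pos _)).ne'
  have hpt : ∀ y : ℝ, mehlerS a (ε * y) t =
      ((Real.sqrt (Real.cosh (a * t)))⁻¹ * (Real.sqrt Real.pi)⁻¹ * ε⁻¹) *
        Real.exp (-y ^ 2) := by
    intro y
    rw [mehler_eq a _ ht]
    have hε2 : ε ^ 2 = 4 * t / Kf a t :=
      Real.sq_sqrt (div_pos h4t hk).le
    have hexp : -((ε * y) ^ 2 / (4 * t)) * Kf a t = -y ^ 2 := by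
      rw [mul_pow, hε2]
      field_simp
    rw [hexp]
    rw [rpow_neg_half _ (by positivity)]
    have h4pt : Real.sqrt (4 * Real.pi * t) = Real.sqrt (4 * t) * Real.sqrt Real.pi := by
      rw [← Real.sqrt_mul (by positivity)]
      ring_nf
    have hεeq : ε = Real.sqrt (4 * t) / Real.sqrt (Kf a t) := by
      rw [hεdef, Real.sqrt_div h4t.le]
    rw [h4pt, hεeq]
    field_simp
  calc ∫ x : ℝ, mehlerS a x t * φ x
      = ε * ∫ x : ℝ, mehlerS a (ε * x) t * φ (ε * x) := h1
    _ = ε * ∫ x : ℝ, ((Real.sqrt (Real.cosh (a * t)))⁻¹ * (Real.sqrt Real.pi)⁻¹ * ε⁻¹) *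
          (Real.exp (-x ^ 2) * φ (ε * x)) := by
        congr 1
        apply integral_congr_ae
        filter_upwards with x
        rw [hpt x]; ring
    _ = ε * (((Real.sqrt (Real.cosh (a * t)))⁻¹ * (Real.sqrt Real.pi)⁻¹ * ε⁻¹) *
          ∫ x : ℝ, Real.exp (-x ^ 2) * φ (ε * x)) := by
        rw [MeasureTheory.integral_const_mul]
    _ = (Real.sqrt (Real.cosh (a * t)))⁻¹ *
        ((Real.sqrt Real.pi)⁻¹ * ∫ y : ℝ, Real.exp (-y ^ 2) * φ (ε * y)) := by
        field_simp

lemma Kf_tendsto (a : ℝ) : Tendsto (fun t : ℝ => Kf a t) (𝓝[>] (0:ℝ)) (𝓝 1) := by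
  by_cases h : a = 0
  · simpa [Kf, h] using tendsto_const_nhds
  · have hslope : Tendsto (fun y : ℝ => Real.sinh y / y) (𝓝[≠] (0:ℝ)) (𝓝 1) := by
      have hd := (Real.hasDerivAt_sinh 0)
      rw [hasDerivAt_iff_tendsto_slope] at hd
      simp only [Real.cosh_zero] at hd
      refine hd.congr fun y => ?_
      simp [slope_def_field, Real.sinh_zero]
    have hinv : Tendsto (fun y : ℝ => y / Real.sinh y) (𝓝[≠] (0:ℝ)) (𝓝 1) := by
      have := hslope.inv₀ one_ne_zero
      simpa [inv_div] using this
    have hcosh : Tendsto (fun y : ℝ => Real.cosh y) (𝓝[≠] (0:ℝ)) (𝓝 1) := by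
      have h0 : Tendsto Real.cosh (𝓝 (0:ℝ)) (𝓝 (Real.cosh 0)) :=
        Real.continuous_cosh.tendsto 0
      simpa using h0.mono_left (nhdsWithin_le_nhds (s := {(0:ℝ)}ᶜ))
    have hmul : Tendsto (fun y : ℝ => y / Real.sinh y * Real.cosh y) (𝓝[≠] (0:ℝ)) (𝓝 1) := by
      simpa using hinv.mul hcosh
    have hmap : Tendsto (fun t : ℝ => a * t) (𝓝[>] (0:ℝ)) (𝓝[≠] (0:ℝ)) := by
      apply tendsto_nhdsWithin_of_tendsto_nhds_of_eventually_within
      · have : Tendsto (fun t : ℝ => a * t) (𝓝 (0:ℝ)) (𝓝 (a * 0)) :=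
          (continuous_const.mul continuous_id).tendsto 0
        simpa using this.mono_left nhdsWithin_le_nhds
      · filter_upwards [self_mem_nhdsWithin] with t ht
        exact mul_ne_zero h (ne_of_gt ht)
    have := hmul.comp hmap
    refine this.congr fun t => ?_
    simp only [Function.comp, Kf, if_neg h]
    rw [Real.tanh_eq_sinh_div_cosh, div_div_eq_mul_div, div_mul_eq_mul_div]

lemma eps_tendsto (a : ℝ) :
    Tendsto (fun t : ℝ => Real.sqrt (4 * t / Kf a t)) (𝓝[>] (0:ℝ)) (𝓝 0) := by
  have h4 : Tendsto (fun t : ℝ => 4 * t) (𝓝[>] (0:ℝ)) (𝓝 0) := by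
    have : Tendsto (fun t : ℝ => 4 * t) (𝓝 (0:ℝ)) (𝓝 (4 * 0)) :=
      (continuous_const.mul continuous_id).tendsto 0
    simpa using this.mono_left nhdsWithin_le_nhds
  have h1 : Tendsto (fun t : ℝ => 4 * t / Kf a t) (𝓝[>] (0:ℝ)) (𝓝 0) := by
    have h := h4.div (Kf_tendsto a) one_ne_zero
    rw [zero_div] at h
    exact h
  have := (Real.continuous_sqrt.tendsto 0).comp h1
  simpa [Function.comp_def] using this

lemma inner_tendsto (a : ℝ) (φ : SchwartzMap ℝ ℝ) :
    Tendsto (fun t : ℝ => ∫ y : ℝ, Real.exp (-y ^ 2) * φ (Real.sqrt (4 * t / Kf a t) * y))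
      (𝓝[>] (0:ℝ)) (𝓝 (Real.sqrt Real.pi * φ 0)) := by
  obtain ⟨C, hC⟩ := φ.decay 0 0
  have hCbd : ∀ x : ℝ, ‖φ x‖ ≤ C := by
    intro x
    have := hC.2 x
    simpa [norm_iteratedFDeriv_zero] using this
  have hlim : Tendsto (fun t : ℝ => ∫ y : ℝ, Real.exp (-y ^ 2) *
      φ (Real.sqrt (4 * t / Kf a t) * y)) (𝓝[>] (0:ℝ))
      (𝓝 (∫ y : ℝ, Real.exp (-y ^ 2) * φ 0)) := by
    apply tendsto_integral_filter_of_dominated_convergence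
      (bound := fun y : ℝ => Real.exp (-y ^ 2) * C)
    · filter_upwards with t
      exact ((Real.continuous_exp.comp (by continuity)).mul
        (φ.continuous.comp (continuous_const.mul continuous_id))).aestronglyMeasurable
    · filter_upwards with t
      filter_upwards with y
      rw [norm_mul, Real.norm_eq_abs, abs_of_pos (Real.exp_pos _)]
      exact mul_le_mul_of_nonneg_left (hCbd _) (Real.exp_pos _).le
    · have : Integrable (fun y : ℝ => Real.exp (-1 * y ^ 2) * C) :=
        (integrable_exp_neg_mul_sq one_pos).mul_const C
      simpa [neg_mul] using this
    · filter_upwards with y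
      have h1 : Tendsto (fun t : ℝ => Real.sqrt (4 * t / Kf a t) * y)
          (𝓝[>] (0:ℝ)) (𝓝 0) := by
        simpa using (eps_tendsto a).mul_const y
      have h2 : Tendsto (fun t : ℝ => φ (Real.sqrt (4 * t / Kf a t) * y))
          (𝓝[>] (0:ℝ)) (𝓝 (φ 0)) := (φ.continuous.tendsto 0).comp h1
      exact tendsto_const_nhds.mul h2
  have hval : (∫ y : ℝ, Real.exp (-y ^ 2) * φ 0) = Real.sqrt Real.pi * φ 0 := by
    rw [MeasureTheory.integral_mul_const]
    have := integral_gaussian 1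
    simp only [neg_mul, one_mul, div_one] at this
    rw [this]
  rwa [hval] at hlim

/-- The Mehler kernel converges to the Dirac mass at `0` as `t → 0⁺`:
for every Schwartz function `φ` on `ℝ`, `∫ S_a(x,t) φ(x) dx → φ(0)`. -/
theorem stmt_6 (a : ℝ) (φ : SchwartzMap ℝ ℝ) :
    Tendsto (fun t : ℝ => ∫ x : ℝ, mehlerS a x t * φ x) (𝓝[>] 0) (𝓝 (φ 0)) := by
  have hcosh : Tendsto (fun t : ℝ => (Real.sqrt (Real.cosh (a * t)))⁻¹)
      (𝓝[>] (0:ℝ)) (𝓝 1) := by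
    have hc : Continuous fun t : ℝ => (Real.sqrt (Real.cosh (a * t)))⁻¹ := by
      apply Continuous.inv₀
      · exact Real.continuous_sqrt.comp (Real.continuous_cosh.comp
          (continuous_const.mul continuous_id))
      · intro t; exact (Real.sqrt_pos.mpr (Real.cosh_pos _)).ne'
    have := (hc.tendsto 0).mono_left (nhdsWithin_le_nhds (s := Set.Ioi (0:ℝ)))
    simpa using this
  have hG : Tendsto (fun t : ℝ => (Real.sqrt (Real.cosh (a * t)))⁻¹ *
      ((Real.sqrt Real.pi)⁻¹ *
        ∫ y : ℝ, Real.exp (-y ^ 2) * φ (Real.sqrt (4 * t / Kf a t) * y)))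
      (𝓝[>] (0:ℝ)) (𝓝 (1 * ((Real.sqrt Real.pi)⁻¹ * (Real.sqrt Real.pi * φ 0)))) :=
    hcosh.mul (tendsto_const_nhds.mul (inner_tendsto a φ))
  have hval : 1 * ((Real.sqrt Real.pi)⁻¹ * (Real.sqrt Real.pi * φ 0)) = φ 0 := by
    have hsp : Real.sqrt Real.pi ≠ 0 := (Real.sqrt_pos.mpr Real.pi_pos).ne'
    field_simp
  rw [hval] at hG
  refine hG.congr' ?_
  filter_upwards [self_mem_nhdsWithin] with t ht
  exact (integral_eq a φ ht).symm
end

section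
/- Let B be a real symmetric positive semidefinite n×n matrix and s ≥ 0. Then the matrix Φ(sB) = Σ_{k≥0} (sB)^k/(2k+1)! (a convergent power series) is symmetric and satisfies ⟨Φ(sB)x, x⟩ ≥ ⟨x,x⟩ for all x ∈ ℝ^n; in particular Φ(sB) is positive definite and det Φ(sB) ≥ 1. -/
open Matrix

/-- The matrix power series `Φ(M) = Σ_{k≥0} M^k/(2k+1)!`, i.e. the entire function
`z ↦ sinh(√z)/√z` evaluated on the square matrix `M`. -/
noncomputable def matPhi {n : ℕ} (M : Matrix (Fin n) (Fin n) ℝ) : Matrix (Fin n) (Fin n) ℝ :=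
  ∑' k : ℕ, (((2 * k + 1).factorial : ℝ))⁻¹ • M ^ k

section aux

variable {n : ℕ} (M : Matrix (Fin n) (Fin n) ℝ)

/-- An entrywise bound for powers of a matrix. -/
lemma matPhi_entry_bound :
    ∃ D : ℝ, 1 ≤ D ∧ ∀ k i j, |(M ^ k) i j| ≤ D ^ k := by
  obtain ⟨C, hC0, hC⟩ : ∃ C : ℝ, 0 ≤ C ∧ ∀ i j, |M i j| ≤ C := by
    refine ⟨∑ i, ∑ j, |M i j|, by positivity, fun i j => ?_⟩
    calc |M i j| ≤ ∑ j, |M i j| :=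
          Finset.single_le_sum (f := fun j => |M i j|) (fun j _ => abs_nonneg _)
            (Finset.mem_univ j)
      _ ≤ ∑ i, ∑ j, |M i j| :=
          Finset.single_le_sum (f := fun i => ∑ j, |M i j|)
            (fun i _ => Finset.sum_nonneg fun j _ => abs_nonneg _) (Finset.mem_univ i)
  refine ⟨n * C + 1, le_add_of_nonneg_left (by positivity), fun k => ?_⟩
  induction k with
  | zero =>
    intro i j
    simp only [pow_zero]
    rcases eq_or_ne i j with rfl | h
    · simp [Matrix.one_apply_eq]
    · simp [Matrix.one_apply_ne h]
  | succ k ih =>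
    intro i j
    have : (M ^ (k + 1)) i j = ∑ l, (M ^ k) i l * M l j := by
      rw [pow_succ]; rfl
    rw [this]
    calc |∑ l, (M ^ k) i l * M l j| ≤ ∑ l, |(M ^ k) i l * M l j| :=
          Finset.abs_sum_le_sum_abs _ _
      _ ≤ ∑ l : Fin n, (n * C + 1) ^ k * C := by
          refine Finset.sum_le_sum fun l _ => ?_
          rw [abs_mul]
          exact mul_le_mul (ih i l) (hC l j) (abs_nonneg _) (by positivity)
      _ = n * C * (n * C + 1) ^ k := by
          rw [Finset.sum_const, Finset.card_univ, Fintype.card_fin, nsmul_eq_mul]; ring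
      _ ≤ (n * C + 1) ^ (k + 1) := by
          rw [pow_succ, mul_comm ((n * C + 1) ^ k)]
          refine mul_le_mul_of_nonneg_right (by linarith) (by positivity)

lemma matPhi_entry_summable (i j : Fin n) :
    Summable fun k : ℕ => ((((2 * k + 1).factorial : ℝ))⁻¹ • M ^ k) i j := by
  obtain ⟨D, hD1, hD⟩ := matPhi_entry_bound M
  refine Summable.of_norm_bounded (g := fun k => D ^ k / k.factorial)
    (Real.summable_pow_div_factorial D) fun k => ?_
  have hfac : (k.factorial : ℝ) ≤ ((2 * k + 1).factorial : ℝ) := by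
    exact_mod_cast Nat.factorial_le (by omega)
  have hfp : (0:ℝ) < k.factorial := by exact_mod_cast k.factorial_pos
  have h2fp : (0:ℝ) < (2 * k + 1).factorial := by exact_mod_cast (2 * k + 1).factorial_pos
  simp only [Matrix.smul_apply, smul_eq_mul, norm_mul, Real.norm_eq_abs]
  calc |(((2 * k + 1).factorial : ℝ))⁻¹| * |(M ^ k) i j|
      ≤ ((k.factorial : ℝ))⁻¹ * D ^ k := by
        refine mul_le_mul ?_ (hD k i j) (abs_nonneg _) (by positivity)
        rw [abs_of_nonneg (by positivity)]
        exact inv_anti₀ hfp hfac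
    _ = D ^ k / k.factorial := by rw [inv_mul_eq_div]

lemma matPhi_summable :
    Summable fun k : ℕ => (((2 * k + 1).factorial : ℝ))⁻¹ • M ^ k := by
  refine Pi.summable.2 fun i => ?_
  refine Pi.summable.2 fun j => ?_
  exact matPhi_entry_summable M i j

lemma matPhi_apply (i j : Fin n) :
    matPhi M i j = ∑' k : ℕ, ((((2 * k + 1).factorial : ℝ))⁻¹ • M ^ k) i j := by
  have h := matPhi_summable M
  rw [matPhi]
  exact (congrFun (tsum_apply h) j).trans (tsum_apply ((Pi.summable).1 h i))

/-- The quadratic-form functional as a continuous linear map on matrices. -/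
noncomputable def quadCLM (x : Fin n → ℝ) :
    Matrix (Fin n) (Fin n) ℝ →L[ℝ] ℝ :=
  LinearMap.toContinuousLinearMap
    { toFun := fun A => A.mulVec x ⬝ᵥ x
      map_add' := fun A C => by
        simp [Matrix.add_mulVec, add_dotProduct]
      map_smul' := fun c A => by
        simp [Matrix.smul_mulVec, smul_dotProduct] }

lemma matPhi_quad (x : Fin n → ℝ) :
    (matPhi M).mulVec x ⬝ᵥ x
      = ∑' k : ℕ, (((2 * k + 1).factorial : ℝ))⁻¹ * ((M ^ k).mulVec x ⬝ᵥ x) := by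
  have h := (quadCLM x).map_tsum (matPhi_summable M)
  have h1 : (quadCLM x) (matPhi M) = (matPhi M).mulVec x ⬝ᵥ x := rfl
  rw [← h1, matPhi, h]
  refine tsum_congr fun k => ?_
  show ((((2 * k + 1).factorial : ℝ))⁻¹ • M ^ k).mulVec x ⬝ᵥ x = _
  rw [Matrix.smul_mulVec, smul_dotProduct, smul_eq_mul]

lemma matPhi_quad_summable (x : Fin n → ℝ) :
    Summable fun k : ℕ =>
      (((2 * k + 1).factorial : ℝ))⁻¹ * ((M ^ k).mulVec x ⬝ᵥ x) := by
  have := ((matPhi_summable M).map (quadCLM x) (quadCLM x).continuous)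
  refine this.congr fun k => ?_
  show (quadCLM x) _ = _
  show ((((2 * k + 1).factorial : ℝ))⁻¹ • M ^ k).mulVec x ⬝ᵥ x = _
  rw [Matrix.smul_mulVec, smul_dotProduct, smul_eq_mul]

end aux

/-- For a real symmetric positive semidefinite matrix `B` and `s ≥ 0`, the
matrix `Φ(sB) = Σ_{k≥0} (sB)^k/(2k+1)!` is symmetric, satisfies `⟨Φ(sB)x, x⟩ ≥ ⟨x,x⟩` for all
`x`, is positive definite, and has determinant at least `1`. -/
theorem stmt_8 (n : ℕ) (B : Matrix (Fin n) (Fin n) ℝ) (hsymm : B.IsSymm) (hB : B.PosSemidef)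
    (s : ℝ) (hs : 0 ≤ s) :
    (matPhi (s • B)).IsSymm ∧
    (∀ x : Fin n → ℝ, x ⬝ᵥ x ≤ ((matPhi (s • B)).mulVec x) ⬝ᵥ x) ∧
    (matPhi (s • B)).PosDef ∧
    1 ≤ (matPhi (s • B)).det := by
  set M := s • B with hM
  have hMsymm : M.IsSymm := by
    rw [Matrix.IsSymm, hM, Matrix.transpose_smul, hsymm]
  have hMpsd : M.PosSemidef := by
    refine Matrix.PosSemidef.of_dotProduct_mulVec_nonneg ?_ fun x => ?_
    · rw [Matrix.IsHermitian, hM, Matrix.conjTranspose_smul]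
      simp only [star_trivial]
      rw [show Bᴴ = B from hB.isHermitian]
    · rw [hM, Matrix.smul_mulVec, dotProduct_smul, smul_eq_mul]
      exact mul_nonneg hs (hB.dotProduct_mulVec_nonneg x)
  -- symmetry
  have hPhiSymm : (matPhi M).IsSymm := by
    rw [Matrix.IsSymm]
    ext i j
    rw [Matrix.transpose_apply, matPhi_apply, matPhi_apply]
    refine tsum_congr fun k => ?_
    simp only [Matrix.smul_apply]
    congr 1
    exact congrFun (congrFun (hMsymm.pow k) i) j
  -- quadratic form lower bound
  have hterm_nonneg : ∀ (x : Fin n → ℝ) (k : ℕ),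
      0 ≤ (((2 * k + 1).factorial : ℝ))⁻¹ * ((M ^ k).mulVec x ⬝ᵥ x) := by
    intro x k
    refine mul_nonneg (by positivity) ?_
    have := (hMpsd.pow k).dotProduct_mulVec_nonneg x
    simpa [dotProduct_comm] using this
  have hquad : ∀ x : Fin n → ℝ, x ⬝ᵥ x ≤ (matPhi M).mulVec x ⬝ᵥ x := by
    intro x
    rw [matPhi_quad]
    have h0 : (((2 * 0 + 1).factorial : ℝ))⁻¹ * ((M ^ 0).mulVec x ⬝ᵥ x) = x ⬝ᵥ x := by
      norm_num
    calc x ⬝ᵥ x = (((2 * 0 + 1).factorial : ℝ))⁻¹ * ((M ^ 0).mulVec x ⬝ᵥ x) := h0.symm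
      _ ≤ ∑' k : ℕ, (((2 * k + 1).factorial : ℝ))⁻¹ * ((M ^ k).mulVec x ⬝ᵥ x) :=
          Summable.le_tsum (matPhi_quad_summable M x) 0 fun k _ => hterm_nonneg x k
  -- positive definiteness
  have hHerm : (matPhi M).IsHermitian := by
    rw [Matrix.IsHermitian]
    simpa using hPhiSymm.eq
  have hPD : (matPhi M).PosDef := by
    refine Matrix.PosDef.of_dotProduct_mulVec_pos hHerm fun x hx => ?_
    have h1 : (0:ℝ) < x ⬝ᵥ x := by
      rcases lt_or_eq_of_le (dotProduct_star_self_nonneg x) with h | h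
      · simpa using h
      · exact absurd (by simpa using h.symm) hx
    calc (0:ℝ) < x ⬝ᵥ x := h1
      _ ≤ (matPhi M).mulVec x ⬝ᵥ x := hquad x
      _ = star x ⬝ᵥ (matPhi M).mulVec x := by rw [dotProduct_comm]; simp
  -- determinant bound
  have hdet : 1 ≤ (matPhi M).det := by
    have heig : ∀ i, 1 ≤ hHerm.eigenvalues i := by
      intro i
      have h1 := hHerm.eigenvalues_eq i
      simp only [star_trivial, RCLike.re_to_real] at h1
      have hvv : (WithLp.equiv 2 _ (hHerm.eigenvectorBasis i) : Fin n → ℝ) ⬝ᵥ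
          (WithLp.equiv 2 _ (hHerm.eigenvectorBasis i) : Fin n → ℝ) = 1 := by
        have hinner := EuclideanSpace.inner_eq_star_dotProduct (𝕜 := ℝ)
          (hHerm.eigenvectorBasis i) (hHerm.eigenvectorBasis i)
        have hnorm : ‖hHerm.eigenvectorBasis i‖ = 1 :=
          hHerm.eigenvectorBasis.orthonormal.1 i
        have h2 : (inner ℝ (hHerm.eigenvectorBasis i) (hHerm.eigenvectorBasis i) : ℝ) = 1 := by
          rw [real_inner_self_eq_norm_sq, hnorm]; norm_num
        rw [hinner] at h2
        simpa using h2
      rw [h1, dotProduct_comm]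
      have hq := hquad ((WithLp.equiv 2 (Fin n → ℝ)) (hHerm.eigenvectorBasis i))
      rw [hvv] at hq
      exact hq
    rw [hHerm.det_eq_prod_eigenvalues]
    calc (1:ℝ) = ∏ _i : Fin n, (1:ℝ) := by simp
      _ ≤ ∏ i, hHerm.eigenvalues i := Finset.prod_le_prod (by simp) (fun i _ => heig i)
  exact ⟨hPhiSymm, hquad, hPD, hdet⟩
end
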